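/- arXiv:2002.04960 — 4 statements merged into one kernel-verified Lean document; each statement's English description precedes it below -/
import Mathlib

section
/- For a > 0 and b > 0, the function x ↦ (1/√(ab))·arctan(√b·x/(√a·√(x²+a+b))) is an antiderivative of x ↦ 1/((x²+a)·√(x²+a+b)) on ℝ. -/
theorem antideriv_arctan_form (a b : ℝ) (ha : 0 < a) (hb : 0 < b) (x : ℝ) :
    HasDerivAt (fun x : ℝ =>
        (1 / Real.sqrt (a * b)) *
          Real.arctan (Real.sqrt b * x / (Real.sqrt a * Real.sqrt (x ^ 2 + a + b))))
      (1 / ((x ^ 2 + a) * Real.sqrt (x ^ 2 + a + b))) x := by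
  have hpos : (0:ℝ) < x ^ 2 + a + b := by positivity
  set s := Real.sqrt (x ^ 2 + a + b) with hsdef
  have hs0 : 0 < s := Real.sqrt_pos.mpr hpos
  have hsq : s ^ 2 = x ^ 2 + a + b := Real.sq_sqrt hpos.le
  set sa := Real.sqrt a with hsadef
  set sb := Real.sqrt b with hsbdef
  have hsa0 : 0 < sa := Real.sqrt_pos.mpr ha
  have hsb0 : 0 < sb := Real.sqrt_pos.mpr hb
  have hsa : sa ^ 2 = a := Real.sq_sqrt ha.le
  have hsb : sb ^ 2 = b := Real.sq_sqrt hb.le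
  have hab : Real.sqrt (a * b) = sa * sb := Real.sqrt_mul ha.le b
  have h1 : HasDerivAt (fun x : ℝ => x ^ 2 + a + b) (2 * x) x := by
    simpa using ((hasDerivAt_pow 2 x).add_const a).add_const b
  have h2 : HasDerivAt (fun x : ℝ => Real.sqrt (x ^ 2 + a + b)) (2 * x / (2 * s)) x :=
    h1.sqrt (ne_of_gt hpos)
  have h3 : HasDerivAt (fun x : ℝ => sa * Real.sqrt (x ^ 2 + a + b))
      (sa * (2 * x / (2 * s))) x := h2.const_mul sa
  have hnum : HasDerivAt (fun x : ℝ => sb * x) sb x := by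
    simpa using (hasDerivAt_id x).const_mul sb
  have hden_ne : sa * s ≠ 0 := by positivity
  have hg : HasDerivAt (fun x : ℝ => sb * x / (sa * Real.sqrt (x ^ 2 + a + b)))
      ((sb * (sa * s) - sb * x * (sa * (2 * x / (2 * s)))) / (sa * s) ^ 2) x :=
    hnum.div h3 hden_ne
  have harc := (Real.hasDerivAt_arctan (sb * x / (sa * s))).comp x hg
  have hfin := harc.const_mul (1 / Real.sqrt (a * b))
  convert hfin using 1
  case e'_4 => rfl
  case e'_5 => rfl
  case e'_8 => rfl
  rw [hab]
  field_simp
  linear_combination (s^2) * hsa + (x^2) * hsb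
    - (x^2) * hsq
end

section
/- For fixed y ∈ ℝ, d > 0, and real limits u < v, ∫_u^v (2·y·d)/(3(χ²+d²)·√(χ²+y²+d²)) dχ = (2/3)·arctan(v·y/(d·√(v²+y²+d²))) − (2/3)·arctan(u·y/(d·√(u²+y²+d²))). -/
theorem second_inner_integral (y d u v : ℝ) (hd : 0 < d) (huv : u < v) :
    ∫ χ in u..v, 2 * y * d / (3 * (χ ^ 2 + d ^ 2) * Real.sqrt (χ ^ 2 + y ^ 2 + d ^ 2)) =
      (2 / 3) * Real.arctan (v * y / (d * Real.sqrt (v ^ 2 + y ^ 2 + d ^ 2))) -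
      (2 / 3) * Real.arctan (u * y / (d * Real.sqrt (u ^ 2 + y ^ 2 + d ^ 2))) := by
  have key : ∀ x : ℝ, HasDerivAt
      (fun χ => (2/3) * Real.arctan (χ * y / (d * Real.sqrt (χ ^ 2 + y ^ 2 + d ^ 2))))
      (2 * y * d / (3 * (x ^ 2 + d ^ 2) * Real.sqrt (x ^ 2 + y ^ 2 + d ^ 2))) x := by
    intro x
    have hq : (0:ℝ) < x ^ 2 + y ^ 2 + d ^ 2 := by positivity
    set s := Real.sqrt (x ^ 2 + y ^ 2 + d ^ 2) with hsdef
    have hs : 0 < s := Real.sqrt_pos.mpr hq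
    have hs2 : s ^ 2 = x ^ 2 + y ^ 2 + d ^ 2 := Real.sq_sqrt hq.le
    have h1 : HasDerivAt (fun χ : ℝ => χ ^ 2 + y ^ 2 + d ^ 2) (2 * x) x := by
      simpa [add_assoc] using ((hasDerivAt_pow 2 x).add_const (y ^ 2 + d ^ 2))
    have h2 : HasDerivAt (fun χ => Real.sqrt (χ ^ 2 + y ^ 2 + d ^ 2)) (x / s) x := by
      have := (Real.hasDerivAt_sqrt hq.ne').comp x h1
      refine this.congr_deriv ?_
      rw [← hsdef]
      field_simp
    have h3 : HasDerivAt (fun χ => χ * y / (d * Real.sqrt (χ ^ 2 + y ^ 2 + d ^ 2)))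
        ((y * (d * s) - x * y * (d * (x / s))) / (d * s) ^ 2) x := by
      refine (((hasDerivAt_id x).mul_const y).div (h2.const_mul d) (by positivity)).congr_deriv ?_
      simp only [id, one_mul]
      rw [← hsdef]
    have h4 := ((Real.hasDerivAt_arctan (x * y / (d * s))).comp x h3).const_mul (2/3 : ℝ)
    refine h4.congr_deriv ?_
    symm
    have h5 : 1 + (x * y / (d * s)) ^ 2 = (x ^ 2 + d ^ 2) * (y ^ 2 + d ^ 2) / (d ^ 2 * s ^ 2) := by
      field_simp
      linear_combination (d ^ 2) * hs2
    rw [h5]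
    have hx2 : (0:ℝ) < x ^ 2 + d ^ 2 := by positivity
    have hy2 : (0:ℝ) < y ^ 2 + d ^ 2 := by positivity
    field_simp
    linear_combination (-y) * hs2
  have hcont : Continuous (fun χ : ℝ =>
      2 * y * d / (3 * (χ ^ 2 + d ^ 2) * Real.sqrt (χ ^ 2 + y ^ 2 + d ^ 2))) := by
    apply Continuous.div continuous_const
    · fun_prop
    · intro χ
      have h1 : (0:ℝ) < χ ^ 2 + d ^ 2 := by positivity
      have h2 : (0:ℝ) < Real.sqrt (χ ^ 2 + y ^ 2 + d ^ 2) := Real.sqrt_pos.mpr (by positivity)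
      positivity
  rw [intervalIntegral.integral_eq_sub_of_hasDerivAt (fun x _ => key x)
    (hcont.intervalIntegrable u v)]
end

section
/- Define α(B) = B/(3(B+1)√(2B+1)) + (2/(3π))·arctan(B/√(2B+1)) for B ≥ 0. Then α(B) ≤ 1/3 for all B ≥ 0. -/
noncomputable def channelGain (B : ℝ) : ℝ :=
  B / (3 * (B + 1) * Real.sqrt (2 * B + 1)) +
    (2 / (3 * Real.pi)) * Real.arctan (B / Real.sqrt (2 * B + 1))

open Real

lemma arctan_le_self' {x : ℝ} (hx : 0 ≤ x) : Real.arctan x ≤ x := by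
  have hmono : Monotone (fun x : ℝ => x - Real.arctan x) := by
    have hd : ∀ x : ℝ, HasDerivAt (fun x : ℝ => x - Real.arctan x)
        (1 - 1 / (1 + x ^ 2)) x := fun x =>
      (hasDerivAt_id x).sub (Real.hasDerivAt_arctan x)
    apply monotone_of_deriv_nonneg
    · exact fun x => ((hd x).differentiableAt)
    · intro x
      rw [(hd x).deriv]
      have h1 : (0:ℝ) < 1 + x ^ 2 := by positivity
      rw [sub_nonneg, div_le_one h1]
      nlinarith [sq_nonneg x]
  have := hmono hx
  simpa [Real.arctan_zero] using this

lemma self_div_le_arctan {x : ℝ} (hx : 0 ≤ x) :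
    x / (1 + x ^ 2) ≤ Real.arctan x := by
  have hmono : Monotone (fun x : ℝ => Real.arctan x - x / (1 + x ^ 2)) := by
    have hd : ∀ x : ℝ, HasDerivAt (fun x : ℝ => Real.arctan x - x / (1 + x ^ 2))
        (1 / (1 + x ^ 2) -
          (1 * (1 + x ^ 2) - x * (2 * x)) / (1 + x ^ 2) ^ 2) x := by
      intro x
      have h1 : (1 : ℝ) + x ^ 2 ≠ 0 := by positivity
      exact (Real.hasDerivAt_arctan x).sub
        (((hasDerivAt_id x).div
          (((hasDerivAt_pow 2 x).const_add 1)) h1).congr_deriv (by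
            field_simp; norm_num <;> ring))
    apply monotone_of_deriv_nonneg
    · exact fun x => ((hd x).differentiableAt)
    · intro x
      rw [(hd x).deriv]
      have h1 : (0:ℝ) < 1 + x ^ 2 := by positivity
      rw [sub_nonneg, div_le_div_iff₀ (by positivity) h1]
      nlinarith [sq_nonneg x]
  have := hmono hx
  simpa [Real.arctan_zero] using this

theorem channelGain_le_one_third (B : ℝ) (hB : 0 ≤ B) :
    channelGain B ≤ 1 / 3 := by
  have hπ : (0:ℝ) < π := Real.pi_pos
  have hπu : π < 3.15 := by
    calc π < 3.141593 := Real.pi_lt_d6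
    _ < 3.15 := by norm_num
  have hπl : 3.14 < π := by
    calc (3.14:ℝ) < 3.141592 := by norm_num
    _ < π := Real.pi_gt_d6
  set s := Real.sqrt (2 * B + 1) with hsdef
  have hs0 : 0 < s := Real.sqrt_pos.mpr (by linarith)
  have hs2 : s ^ 2 = 2 * B + 1 := Real.sq_sqrt (by linarith)
  have hB1 : (0:ℝ) < B + 1 := by linarith
  unfold channelGain
  rw [← hsdef]
  rcases le_or_gt B 2 with hle | hgt
  · -- small B : use arctan x ≤ x
    have hat : Real.arctan (B / s) ≤ B / s := arctan_le_self' (by positivity)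
    have key : π * B + 2 * B * (B + 1) ≤ π * (B + 1) * s := by
      have hq : (π * B + 2 * B * (B + 1)) / (π * (B + 1)) ≤ s := by
        rw [Real.le_sqrt (by positivity) (by linarith)]
        rw [div_pow, div_le_iff₀ (by positivity)]
        have hπ2 : (9.85:ℝ) < π ^ 2 := by nlinarith
        nlinarith [hπ2, hπu, mul_nonneg (sub_nonneg.2 hle) (pow_nonneg hB 3),
          mul_nonneg (sub_nonneg.2 hle) (sq_nonneg B),
          mul_nonneg (sq_nonneg B) hB1.le, pow_nonneg hB 3, sq_nonneg B, hB]
      calc π * B + 2 * B * (B + 1)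
          = (π * B + 2 * B * (B + 1)) / (π * (B + 1)) * (π * (B + 1)) := by
            field_simp
        _ ≤ s * (π * (B + 1)) := by
            exact mul_le_mul_of_nonneg_right hq (by positivity)
        _ = π * (B + 1) * s := by ring
    have expand : B / (3 * (B + 1) * s) + 2 / (3 * π) * (B / s)
        = (π * B + 2 * B * (B + 1)) / (3 * π * (B + 1) * s) := by
      field_simp
    have h2 : B / (3 * (B + 1) * s) + 2 / (3 * π) * (B / s) ≤ 1 / 3 := by
      rw [expand, div_le_iff₀ (by positivity)]
      nlinarith [key]
    have h3 : 2 / (3 * π) * Real.arctan (B / s) ≤ 2 / (3 * π) * (B / s) :=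
      mul_le_mul_of_nonneg_left hat (by positivity)
    linarith
  · -- large B : use x/(1+x²) ≤ arctan x applied to s/B
    have hBpos : (0:ℝ) < B := by linarith
    have hinv : Real.arctan (B / s) = π / 2 - Real.arctan (s / B) := by
      rw [show B / s = (s / B)⁻¹ by rw [inv_div], Real.arctan_inv_of_pos (by positivity)]
    have hlow : (s / B) / (1 + (s / B) ^ 2) ≤ Real.arctan (s / B) :=
      self_div_le_arctan (by positivity)
    have hsimp : (s / B) / (1 + (s / B) ^ 2) = s * B / (B + 1) ^ 2 := by
      have h1 : 1 + (s / B) ^ 2 = (B + 1) ^ 2 / B ^ 2 := by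
        rw [div_pow]
        field_simp
        linear_combination hs2
      rw [h1]
      field_simp
    have key2 : π * (B + 1) ≤ 2 * (2 * B + 1) := by nlinarith
    have step : B / (3 * (B + 1) * s) ≤ 2 / (3 * π) * (s * B / (B + 1) ^ 2) := by
      rw [show 2 / (3 * π) * (s * B / (B + 1) ^ 2)
          = (2 * s * B) / (3 * π * (B + 1) ^ 2) by field_simp,
        div_le_div_iff₀ (by positivity) (by positivity)]
      nlinarith [mul_le_mul_of_nonneg_left key2 (by positivity : (0:ℝ) ≤ 3 * B * (B + 1)), hs2]
    have hmono2 : 2 / (3 * π) * (s * B / (B + 1) ^ 2) ≤ 2 / (3 * π) * Real.arctan (s / B) :=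
      mul_le_mul_of_nonneg_left (hsimp ▸ hlow) (by positivity)
    have h1 : B / (3 * (B + 1) * s) ≤ 2 / (3 * π) * Real.arctan (s / B) :=
      step.trans hmono2
    have expand : 2 / (3 * π) * (π / 2 - Real.arctan (s / B))
        = 1 / 3 - 2 / (3 * π) * Real.arctan (s / B) := by
      field_simp
    rw [hinv, expand]
    linarith
end

section
/- Define α(B) = B/(3(B+1)√(2B+1)) + (2/(3π))·arctan(B/√(2B+1)). Then α is monotonically increasing on [0, ∞). -/
lemma channelGain_hasDerivAt {x : ℝ} (hx : 0 ≤ x) :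
    HasDerivAt channelGain
      ((1 + x - x ^ 2) / (3 * (x + 1) ^ 2 * Real.sqrt (2 * x + 1) ^ 3) +
        (2 / (3 * Real.pi)) * (1 / ((x + 1) * Real.sqrt (2 * x + 1)))) x := by
  have h2 : (0 : ℝ) < 2 * x + 1 := by linarith
  set s := Real.sqrt (2 * x + 1) with hsdef
  have hs0 : 0 < s := Real.sqrt_pos.mpr h2
  have hs2 : s ^ 2 = 2 * x + 1 := Real.sq_sqrt h2.le
  have hx1 : (0 : ℝ) < x + 1 := by linarith
  have h1 : HasDerivAt (fun y : ℝ => 2 * y + 1) 2 x := by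
    simpa using ((hasDerivAt_id x).const_mul 2).add_const 1
  have hsq : HasDerivAt (fun y : ℝ => Real.sqrt (2 * y + 1)) (1 / s) x := by
    have h := (Real.hasDerivAt_sqrt (ne_of_gt h2)).comp x h1
    refine h.congr_deriv (Eq.symm ?_); rw [← hsdef]; field_simp
  have hu : HasDerivAt (fun y : ℝ => y / Real.sqrt (2 * y + 1)) ((x + 1) / s ^ 3) x := by
    have h := (hasDerivAt_id x).div hsq (ne_of_gt hs0)
    refine h.congr_deriv (Eq.symm ?_)
    rw [← hsdef]; simp only [id]; field_simp; linear_combination (-1 : ℝ) * hs2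
  have harctan : HasDerivAt (fun y : ℝ => Real.arctan (y / Real.sqrt (2 * y + 1)))
      (1 / ((x + 1) * s)) x := by
    have h := (Real.hasDerivAt_arctan (x / s)).comp x hu
    refine h.congr_deriv (Eq.symm ?_)
    have h1u : 1 + (x / s) ^ 2 = (x + 1) ^ 2 / s ^ 2 := by
      field_simp; linear_combination hs2
    rw [h1u]; field_simp
  have hd : HasDerivAt (fun y : ℝ => 3 * (y + 1) * Real.sqrt (2 * y + 1))
      (3 * s + 3 * (x + 1) * (1 / s)) x := by
    have hlin : HasDerivAt (fun y : ℝ => 3 * (y + 1)) 3 x := by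
      simpa using ((hasDerivAt_id x).add_const 1).const_mul 3
    have h := hlin.mul hsq
    refine h.congr_deriv (Eq.symm ?_); rw [← hsdef]
  have hdne : 3 * (x + 1) * s ≠ 0 := by positivity
  have hg : HasDerivAt (fun y : ℝ => y / (3 * (y + 1) * Real.sqrt (2 * y + 1)))
      ((1 + x - x ^ 2) / (3 * (x + 1) ^ 2 * s ^ 3)) x := by
    have h := (hasDerivAt_id x).div hd hdne
    refine h.congr_deriv (Eq.symm ?_)
    rw [← hsdef]; simp only [id]; field_simp; linear_combination (-1 : ℝ) * hs2
  exact hg.add (harctan.const_mul (2 / (3 * Real.pi)))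

theorem channelGain_monotone : MonotoneOn channelGain (Set.Ici (0 : ℝ)) := by
  apply monotoneOn_of_deriv_nonneg (convex_Ici 0)
  · intro x hx
    exact (channelGain_hasDerivAt hx).continuousAt.continuousWithinAt
  · intro x hx
    rw [interior_Ici] at hx
    exact (channelGain_hasDerivAt (le_of_lt hx)).differentiableAt.differentiableWithinAt
  · intro x hx
    rw [interior_Ici] at hx
    have hx0 : (0 : ℝ) ≤ x := le_of_lt hx
    rw [(channelGain_hasDerivAt hx0).deriv]
    have h2 : (0 : ℝ) < 2 * x + 1 := by linarith
    set s := Real.sqrt (2 * x + 1) with hsdef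
    have hs0 : 0 < s := Real.sqrt_pos.mpr h2
    have hs2 : s ^ 2 = 2 * x + 1 := Real.sq_sqrt h2.le
    have hx1 : (0 : ℝ) < x + 1 := by linarith
    have hpi : (0 : ℝ) < Real.pi := Real.pi_pos
    have key : (1 + x - x ^ 2) / (3 * (x + 1) ^ 2 * s ^ 3) +
        (2 / (3 * Real.pi)) * (1 / ((x + 1) * s)) =
        (Real.pi * (1 + x - x ^ 2) + 2 * (x + 1) * s ^ 2) /
          (3 * Real.pi * (x + 1) ^ 2 * s ^ 3) := by
      field_simp
    rw [key, hs2]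
    apply div_nonneg
    · nlinarith [mul_nonneg (sub_nonneg.mpr Real.pi_le_four) (sq_nonneg x),
        mul_nonneg hpi.le hx0]
    · positivity
end
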